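/- Let x ∈ ℝ (or ℂ) with x ≠ 0 and e^{2πi/x} ≠ 1. Define F(β) := (1/2)·[ (e^z/(e^z−1))(β e^{zβ} − (e^{zβ}−1)/(e^z−1)) + (e^{−z}/(e^{−z}−1))(β e^{−zβ} − (e^{−zβ}−1)/(e^{−z}−1)) ] with z = 2πi/x. Then F(x) = x/2. (Interpretation: the fractional sum ∑_{k=1}^{x} cos(2πk/x)·k equals x/2.) -/

import Mathlib

open Complex Real

theorem stmt_17 (x z : ℂ) (hx : x ≠ 0) (hz : z = 2 * Real.pi * Complex.I / x)
    (hne : Complex.exp z ≠ 1)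
    (F : ℂ → ℂ)
    (hF : F = fun β => (1/2) *
      ((Complex.exp z / (Complex.exp z - 1)) *
          (β * Complex.exp (z * β) - (Complex.exp (z * β) - 1) / (Complex.exp z - 1)) +
        (Complex.exp (-z) / (Complex.exp (-z) - 1)) *
          (β * Complex.exp (-z * β) -
            (Complex.exp (-z * β) - 1) / (Complex.exp (-z) - 1)))) :
    F x = x / 2 := by
  have hzx : z * x = 2 * Real.pi * Complex.I := by
    rw [hz]; field_simp
  have h1 : Complex.exp (z * x) = 1 := by
    rw [hzx, Complex.exp_two_pi_mul_I]
  have h2 : Complex.exp (-z * x) = 1 := by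
    rw [neg_mul, Complex.exp_neg, h1, inv_one]
  have hne1 : Complex.exp z - 1 ≠ 0 := sub_ne_zero.mpr hne
  have hne2 : Complex.exp (-z) - 1 ≠ 0 := by
    rw [Complex.exp_neg]
    intro h
    apply hne
    have := Complex.exp_ne_zero z
    field_simp at h
    rw [mul_zero] at h
    exact (sub_eq_zero.mp h).symm
  rw [hF]
  simp only [h1, h2]
  rw [Complex.exp_neg]
  have hne3 : (1:ℂ) - Complex.exp z ≠ 0 := fun h => hne (sub_eq_zero.mp h).symm
  field_simp
  ring
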